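/- Let A₀ be a real symmetric n×n matrix and a₀ ∈ ℝⁿ, let V = [[−A₀, a₀, 0], [a₀ᵀ, 0, −a₀ᵀ], [0, −a₀, A₀]], and for each t let exp(tV) = G₁(t) G₂(t) be the block Cholesky decomposition with block sizes (n,1,n). Write L(t) = G₁(t)⁻¹ V G₁(t) = [[−Q(t), r(t), 0], [a₀ᵀ, 0, −r(t)ᵀ], [0, −a₀, Q(t)ᵀ]] and M(t) = [[−Q(t), 0, 0], [a₀ᵀ, 0, 0], [0, −a₀, Q(t)ᵀ]]. Then L satisfies the Lax equation L̇(t) = [L(t), M(t)] = L(t)M(t) − M(t)L(t) for all t ∈ ℝ. -/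

import Mathlib

open Matrix

/-- Index type for `(2n+1)×(2n+1)` real matrices with block sizes `(n, 1, n)`. -/
abbrev Idx (n : ℕ) := (Fin n ⊕ Fin 1) ⊕ Fin n

/-- The `3×3`-block matrix with block sizes `(n,1,n)` and the given blocks. -/
def blk3 {n : ℕ} (A₁₁ : Matrix (Fin n) (Fin n) ℝ) (A₁₂ : Matrix (Fin n) (Fin 1) ℝ)
    (A₁₃ : Matrix (Fin n) (Fin n) ℝ) (A₂₁ : Matrix (Fin 1) (Fin n) ℝ)
    (A₂₂ : Matrix (Fin 1) (Fin 1) ℝ) (A₂₃ : Matrix (Fin 1) (Fin n) ℝ)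
    (A₃₁ : Matrix (Fin n) (Fin n) ℝ) (A₃₂ : Matrix (Fin n) (Fin 1) ℝ)
    (A₃₃ : Matrix (Fin n) (Fin n) ℝ) : Matrix (Idx n) (Idx n) ℝ :=
  Matrix.fromBlocks (Matrix.fromBlocks A₁₁ A₁₂ A₂₁ A₂₂) (Matrix.fromRows A₁₃ A₂₃)
    (Matrix.fromCols A₃₁ A₃₂) A₃₃

/-- The matrix `J = [[0,0,Iₙ],[0,1,0],[Iₙ,0,0]]` with block sizes `(n,1,n)`. -/
def Jmat (n : ℕ) : Matrix (Idx n) (Idx n) ℝ := blk3 0 0 1 0 1 0 1 0 0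

/-- The matrix `V = [[−A₀, a₀, 0], [a₀ᵀ, 0, −a₀ᵀ], [0, −a₀, A₀]]` with block sizes `(n,1,n)`. -/
def Vmat {n : ℕ} (A₀ : Matrix (Fin n) (Fin n) ℝ) (a₀ : Matrix (Fin n) (Fin 1) ℝ) :
    Matrix (Idx n) (Idx n) ℝ :=
  blk3 (-A₀) a₀ 0 a₀ᵀ 0 (-a₀ᵀ) 0 (-a₀) A₀

namespace Stmt13Aux

variable {n : ℕ}

/-! ### Block matrix basics -/

section
variable (A₁₁ B₁₁ : Matrix (Fin n) (Fin n) ℝ) (A₁₂ B₁₂ : Matrix (Fin n) (Fin 1) ℝ)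
    (A₁₃ B₁₃ : Matrix (Fin n) (Fin n) ℝ) (A₂₁ B₂₁ : Matrix (Fin 1) (Fin n) ℝ)
    (A₂₂ B₂₂ : Matrix (Fin 1) (Fin 1) ℝ) (A₂₃ B₂₃ : Matrix (Fin 1) (Fin n) ℝ)
    (A₃₁ B₃₁ : Matrix (Fin n) (Fin n) ℝ) (A₃₂ B₃₂ : Matrix (Fin n) (Fin 1) ℝ)
    (A₃₃ B₃₃ : Matrix (Fin n) (Fin n) ℝ)

lemma blk3_mul :
    blk3 A₁₁ A₁₂ A₁₃ A₂₁ A₂₂ A₂₃ A₃₁ A₃₂ A₃₃ * blk3 B₁₁ B₁₂ B₁₃ B₂₁ B₂₂ B₂₃ B₃₁ B₃₂ B₃₃ =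
    blk3 (A₁₁*B₁₁ + A₁₂*B₂₁ + A₁₃*B₃₁) (A₁₁*B₁₂ + A₁₂*B₂₂ + A₁₃*B₃₂) (A₁₁*B₁₃ + A₁₂*B₂₃ + A₁₃*B₃₃)
         (A₂₁*B₁₁ + A₂₂*B₂₁ + A₂₃*B₃₁) (A₂₁*B₁₂ + A₂₂*B₂₂ + A₂₃*B₃₂) (A₂₁*B₁₃ + A₂₂*B₂₃ + A₂₃*B₃₃)
         (A₃₁*B₁₁ + A₃₂*B₂₁ + A₃₃*B₃₁) (A₃₁*B₁₂ + A₃₂*B₂₂ + A₃₃*B₃₂) (A₃₁*B₁₃ + A₃₂*B₂₃ + A₃₃*B₃₃) := by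
  ext i j
  rcases i with (i | i) | i <;> rcases j with (j | j) | j <;>
    simp [blk3, Matrix.mul_apply, Fintype.sum_sum_type, Matrix.add_apply, add_comm, add_assoc]

lemma blk3_inj
    (h : blk3 A₁₁ A₁₂ A₁₃ A₂₁ A₂₂ A₂₃ A₃₁ A₃₂ A₃₃ = blk3 B₁₁ B₁₂ B₁₃ B₂₁ B₂₂ B₂₃ B₃₁ B₃₂ B₃₃) :
    A₁₁ = B₁₁ ∧ A₁₂ = B₁₂ ∧ A₁₃ = B₁₃ ∧ A₂₁ = B₂₁ ∧ A₂₂ = B₂₂ ∧ A₂₃ = B₂₃ ∧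
      A₃₁ = B₃₁ ∧ A₃₂ = B₃₂ ∧ A₃₃ = B₃₃ := by
  refine ⟨?_, ?_, ?_, ?_, ?_, ?_, ?_, ?_, ?_⟩ <;> ext i j
  · exact congrFun (congrFun h (Sum.inl (Sum.inl i))) (Sum.inl (Sum.inl j))
  · exact congrFun (congrFun h (Sum.inl (Sum.inl i))) (Sum.inl (Sum.inr j))
  · exact congrFun (congrFun h (Sum.inl (Sum.inl i))) (Sum.inr j)
  · exact congrFun (congrFun h (Sum.inl (Sum.inr i))) (Sum.inl (Sum.inl j))
  · exact congrFun (congrFun h (Sum.inl (Sum.inr i))) (Sum.inl (Sum.inr j))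
  · exact congrFun (congrFun h (Sum.inl (Sum.inr i))) (Sum.inr j)
  · exact congrFun (congrFun h (Sum.inr i)) (Sum.inl (Sum.inl j))
  · exact congrFun (congrFun h (Sum.inr i)) (Sum.inl (Sum.inr j))
  · exact congrFun (congrFun h (Sum.inr i)) (Sum.inr j)

lemma blk3_one : (1 : Matrix (Idx n) (Idx n) ℝ) = blk3 1 0 0 0 1 0 0 0 1 := by
  ext i j
  rcases i with (i | i) | i <;> rcases j with (j | j) | j <;>
    simp [blk3, Matrix.one_apply, Sum.inl.injEq, Sum.inr.injEq]

lemma blk3_add :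
    blk3 A₁₁ A₁₂ A₁₃ A₂₁ A₂₂ A₂₃ A₃₁ A₃₂ A₃₃ + blk3 B₁₁ B₁₂ B₁₃ B₂₁ B₂₂ B₂₃ B₃₁ B₃₂ B₃₃ =
    blk3 (A₁₁+B₁₁) (A₁₂+B₁₂) (A₁₃+B₁₃) (A₂₁+B₂₁) (A₂₂+B₂₂) (A₂₃+B₂₃) (A₃₁+B₃₁) (A₃₂+B₃₂) (A₃₃+B₃₃) := by
  ext i j
  rcases i with (i | i) | i <;> rcases j with (j | j) | j <;> simp [blk3]

lemma blk3_congr (h11 : A₁₁ = B₁₁) (h12 : A₁₂ = B₁₂) (h13 : A₁₃ = B₁₃) (h21 : A₂₁ = B₂₁)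
    (h22 : A₂₂ = B₂₂) (h23 : A₂₃ = B₂₃) (h31 : A₃₁ = B₃₁) (h32 : A₃₂ = B₃₂) (h33 : A₃₃ = B₃₃) :
    blk3 A₁₁ A₁₂ A₁₃ A₂₁ A₂₂ A₂₃ A₃₁ A₃₂ A₃₃ = blk3 B₁₁ B₁₂ B₁₃ B₂₁ B₂₂ B₂₃ B₃₁ B₃₂ B₃₃ := by
  rw [h11, h12, h13, h21, h22, h23, h31, h32, h33]

end

def sub11 (X : Matrix (Idx n) (Idx n) ℝ) : Matrix (Fin n) (Fin n) ℝ :=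
  X.submatrix (Sum.inl ∘ Sum.inl) (Sum.inl ∘ Sum.inl)
def sub12 (X : Matrix (Idx n) (Idx n) ℝ) : Matrix (Fin n) (Fin 1) ℝ :=
  X.submatrix (Sum.inl ∘ Sum.inl) (Sum.inl ∘ Sum.inr)
def sub13 (X : Matrix (Idx n) (Idx n) ℝ) : Matrix (Fin n) (Fin n) ℝ :=
  X.submatrix (Sum.inl ∘ Sum.inl) Sum.inr
def sub21 (X : Matrix (Idx n) (Idx n) ℝ) : Matrix (Fin 1) (Fin n) ℝ :=
  X.submatrix (Sum.inl ∘ Sum.inr) (Sum.inl ∘ Sum.inl)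
def sub22 (X : Matrix (Idx n) (Idx n) ℝ) : Matrix (Fin 1) (Fin 1) ℝ :=
  X.submatrix (Sum.inl ∘ Sum.inr) (Sum.inl ∘ Sum.inr)
def sub23 (X : Matrix (Idx n) (Idx n) ℝ) : Matrix (Fin 1) (Fin n) ℝ :=
  X.submatrix (Sum.inl ∘ Sum.inr) Sum.inr
def sub31 (X : Matrix (Idx n) (Idx n) ℝ) : Matrix (Fin n) (Fin n) ℝ :=
  X.submatrix Sum.inr (Sum.inl ∘ Sum.inl)
def sub32 (X : Matrix (Idx n) (Idx n) ℝ) : Matrix (Fin n) (Fin 1) ℝ :=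
  X.submatrix Sum.inr (Sum.inl ∘ Sum.inr)
def sub33 (X : Matrix (Idx n) (Idx n) ℝ) : Matrix (Fin n) (Fin n) ℝ :=
  X.submatrix Sum.inr Sum.inr

lemma eq_blk3 (X : Matrix (Idx n) (Idx n) ℝ) :
    X = blk3 (sub11 X) (sub12 X) (sub13 X) (sub21 X) (sub22 X) (sub23 X)
      (sub31 X) (sub32 X) (sub33 X) := by
  ext i j
  rcases i with (i | i) | i <;> rcases j with (j | j) | j <;> rfl

lemma det_blk3_lower (B₁₁ : Matrix (Fin n) (Fin n) ℝ) (B₂₁ : Matrix (Fin 1) (Fin n) ℝ)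
    (B₂₂ : Matrix (Fin 1) (Fin 1) ℝ) (B₃₁ : Matrix (Fin n) (Fin n) ℝ)
    (B₃₂ : Matrix (Fin n) (Fin 1) ℝ) (B₃₃ : Matrix (Fin n) (Fin n) ℝ) :
    (blk3 B₁₁ 0 0 B₂₁ B₂₂ 0 B₃₁ B₃₂ B₃₃).det = B₁₁.det * B₂₂.det * B₃₃.det := by
  have h : blk3 B₁₁ 0 0 B₂₁ B₂₂ 0 B₃₁ B₃₂ B₃₃ =
      Matrix.fromBlocks (Matrix.fromBlocks B₁₁ 0 B₂₁ B₂₂) 0 (Matrix.fromCols B₃₁ B₃₂) B₃₃ := by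
    unfold blk3; rw [Matrix.fromRows_zero]
  rw [h, Matrix.det_fromBlocks_zero₁₂, Matrix.det_fromBlocks_zero₁₂]

/-! ### Entrywise calculus helpers -/

lemma entry_hasDerivAt_mul {m k p : Type*} [Fintype k] (A A' : ℝ → Matrix m k ℝ)
    (B B' : ℝ → Matrix k p ℝ) (t : ℝ)
    (hA : ∀ i j, HasDerivAt (fun s => A s i j) (A' t i j) t)
    (hB : ∀ i j, HasDerivAt (fun s => B s i j) (B' t i j) t) (i : m) (j : p) :
    HasDerivAt (fun s => (A s * B s) i j) ((A' t * B t + A t * B' t) i j) t := by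
  simp only [Matrix.mul_apply, Matrix.add_apply]
  rw [← Finset.sum_add_distrib]
  exact HasDerivAt.fun_sum fun k _ => ((hA i k).mul (hB k j))

lemma entry_differentiableAt_mul {m k p : Type*} [Fintype k] (A : ℝ → Matrix m k ℝ)
    (B : ℝ → Matrix k p ℝ) (t : ℝ)
    (hA : ∀ i j, DifferentiableAt ℝ (fun s => A s i j) t)
    (hB : ∀ i j, DifferentiableAt ℝ (fun s => B s i j) t) (i : m) (j : p) :
    DifferentiableAt ℝ (fun s => (A s * B s) i j) t := by
  simp only [Matrix.mul_apply]
  exact DifferentiableAt.fun_sum fun k _ => ((hA i k).mul (hB k j))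

lemma det_differentiableAt {m : Type*} [Fintype m] [DecidableEq m] (A : ℝ → Matrix m m ℝ)
    (t : ℝ) (hA : ∀ i j, DifferentiableAt ℝ (fun s => A s i j) t) :
    DifferentiableAt ℝ (fun s => (A s).det) t := by
  simp only [Matrix.det_apply']
  refine DifferentiableAt.fun_sum fun σ _ => DifferentiableAt.const_mul ?_ _
  have h : ∀ i j, HasDerivAt (fun s => A s i j) (deriv (fun s => A s i j) t) t :=
    fun i j => (hA i j).hasDerivAt
  exact (HasDerivAt.fun_finset_prod (fun i _ => h (σ i) i)).differentiableAt

lemma inv_entry_differentiableAt {m : Type*} [Fintype m] [DecidableEq m] (A : ℝ → Matrix m m ℝ)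
    (t : ℝ) (hA : ∀ i j, DifferentiableAt ℝ (fun s => A s i j) t)
    (hdet : (A t).det ≠ 0) (i j : m) :
    DifferentiableAt ℝ (fun s => (A s)⁻¹ i j) t := by
  have hadj : ∀ i j, DifferentiableAt ℝ (fun s => (A s).adjugate i j) t := by
    intro i j
    simp only [Matrix.adjugate_apply]
    refine det_differentiableAt _ t fun i' j' => ?_
    by_cases h : i' = j
    · simp only [Matrix.updateRow_apply, h, if_true]
      exact differentiableAt_const _
    · simp only [Matrix.updateRow_apply, h, if_false]
      exact hA i' j'
  simp only [Matrix.inv_def, Ring.inverse_eq_inv, Matrix.smul_apply, smul_eq_mul]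
  exact ((det_differentiableAt A t hA).inv hdet).mul (hadj i j)

lemma blk3_entry_hasDerivAt {t : ℝ}
    {A₁₁ : ℝ → Matrix (Fin n) (Fin n) ℝ} {A₁₂ : ℝ → Matrix (Fin n) (Fin 1) ℝ}
    {A₁₃ : ℝ → Matrix (Fin n) (Fin n) ℝ} {A₂₁ : ℝ → Matrix (Fin 1) (Fin n) ℝ}
    {A₂₂ : ℝ → Matrix (Fin 1) (Fin 1) ℝ} {A₂₃ : ℝ → Matrix (Fin 1) (Fin n) ℝ}
    {A₃₁ : ℝ → Matrix (Fin n) (Fin n) ℝ} {A₃₂ : ℝ → Matrix (Fin n) (Fin 1) ℝ}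
    {A₃₃ : ℝ → Matrix (Fin n) (Fin n) ℝ}
    {B₁₁ : Matrix (Fin n) (Fin n) ℝ} {B₁₂ : Matrix (Fin n) (Fin 1) ℝ}
    {B₁₃ : Matrix (Fin n) (Fin n) ℝ} {B₂₁ : Matrix (Fin 1) (Fin n) ℝ}
    {B₂₂ : Matrix (Fin 1) (Fin 1) ℝ} {B₂₃ : Matrix (Fin 1) (Fin n) ℝ}
    {B₃₁ : Matrix (Fin n) (Fin n) ℝ} {B₃₂ : Matrix (Fin n) (Fin 1) ℝ}
    {B₃₃ : Matrix (Fin n) (Fin n) ℝ}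
    (h11 : ∀ i j, HasDerivAt (fun s => A₁₁ s i j) (B₁₁ i j) t)
    (h12 : ∀ i j, HasDerivAt (fun s => A₁₂ s i j) (B₁₂ i j) t)
    (h13 : ∀ i j, HasDerivAt (fun s => A₁₃ s i j) (B₁₃ i j) t)
    (h21 : ∀ i j, HasDerivAt (fun s => A₂₁ s i j) (B₂₁ i j) t)
    (h22 : ∀ i j, HasDerivAt (fun s => A₂₂ s i j) (B₂₂ i j) t)
    (h23 : ∀ i j, HasDerivAt (fun s => A₂₃ s i j) (B₂₃ i j) t)
    (h31 : ∀ i j, HasDerivAt (fun s => A₃₁ s i j) (B₃₁ i j) t)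
    (h32 : ∀ i j, HasDerivAt (fun s => A₃₂ s i j) (B₃₂ i j) t)
    (h33 : ∀ i j, HasDerivAt (fun s => A₃₃ s i j) (B₃₃ i j) t) (i j : Idx n) :
    HasDerivAt (fun s => blk3 (A₁₁ s) (A₁₂ s) (A₁₃ s) (A₂₁ s) (A₂₂ s) (A₂₃ s)
      (A₃₁ s) (A₃₂ s) (A₃₃ s) i j)
      (blk3 B₁₁ B₁₂ B₁₃ B₂₁ B₂₂ B₂₃ B₃₁ B₃₂ B₃₃ i j) t := by
  rcases i with (i | i) | i <;> rcases j with (j | j) | j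
  · exact h11 i j
  · exact h12 i j
  · exact h13 i j
  · exact h21 i j
  · exact h22 i j
  · exact h23 i j
  · exact h31 i j
  · exact h32 i j
  · exact h33 i j

/-! ### The exponential and its blocks -/

noncomputable def Em (V : Matrix (Idx n) (Idx n) ℝ) (s : ℝ) : Matrix (Idx n) (Idx n) ℝ :=
  NormedSpace.exp (s • V)

section ExpDeriv
attribute [local instance] Matrix.linftyOpNormedAddCommGroup Matrix.linftyOpNormedRing
  Matrix.linftyOpNormedAlgebra

lemma Em_entry_hasDerivAt (V : Matrix (Idx n) (Idx n) ℝ) (t : ℝ) (i j : Idx n) :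
    HasDerivAt (fun s : ℝ => Em V s i j) ((V * Em V t) i j) t := by
  have h := hasDerivAt_exp_smul_const' (𝕂 := ℝ) V t
  let L : Matrix (Idx n) (Idx n) ℝ →ₗ[ℝ] ℝ :=
    { toFun := fun A => A i j, map_add' := by intros; rfl, map_smul' := by intros; rfl }
  have hL := (LinearMap.toContinuousLinearMap L).hasFDerivAt (x := NormedSpace.exp (t • V))
  exact hL.comp_hasDerivAt t h

end ExpDeriv

lemma isUnit_Em (V : Matrix (Idx n) (Idx n) ℝ) (s : ℝ) : IsUnit (Em V s) :=
  Matrix.isUnit_exp (s • V)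

/-! ### The explicit Cholesky factors -/

noncomputable section

variable (V : Matrix (Idx n) (Idx n) ℝ)

def e11 (s : ℝ) : Matrix (Fin n) (Fin n) ℝ := sub11 (Em V s)
def e12 (s : ℝ) : Matrix (Fin n) (Fin 1) ℝ := sub12 (Em V s)
def e13 (s : ℝ) : Matrix (Fin n) (Fin n) ℝ := sub13 (Em V s)
def e21 (s : ℝ) : Matrix (Fin 1) (Fin n) ℝ := sub21 (Em V s)
def e22 (s : ℝ) : Matrix (Fin 1) (Fin 1) ℝ := sub22 (Em V s)
def e23 (s : ℝ) : Matrix (Fin 1) (Fin n) ℝ := sub23 (Em V s)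
def e31 (s : ℝ) : Matrix (Fin n) (Fin n) ℝ := sub31 (Em V s)
def e32 (s : ℝ) : Matrix (Fin n) (Fin 1) ℝ := sub32 (Em V s)
def e33 (s : ℝ) : Matrix (Fin n) (Fin n) ℝ := sub33 (Em V s)

def c12 (s : ℝ) : Matrix (Fin n) (Fin 1) ℝ := (e11 V s)⁻¹ * e12 V s
def c13 (s : ℝ) : Matrix (Fin n) (Fin n) ℝ := (e11 V s)⁻¹ * e13 V s
def b22 (s : ℝ) : Matrix (Fin 1) (Fin 1) ℝ := e22 V s - e21 V s * c12 V s
def c23 (s : ℝ) : Matrix (Fin 1) (Fin n) ℝ := (b22 V s)⁻¹ * (e23 V s - e21 V s * c13 V s)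
def b32 (s : ℝ) : Matrix (Fin n) (Fin 1) ℝ := e32 V s - e31 V s * c12 V s
def b33 (s : ℝ) : Matrix (Fin n) (Fin n) ℝ := e33 V s - e31 V s * c13 V s - b32 V s * c23 V s

def F1 (s : ℝ) : Matrix (Idx n) (Idx n) ℝ :=
  blk3 (e11 V s) 0 0 (e21 V s) (b22 V s) 0 (e31 V s) (b32 V s) (b33 V s)

def F2 (s : ℝ) : Matrix (Idx n) (Idx n) ℝ :=
  blk3 1 (c12 V s) (c13 V s) 0 1 (c23 V s) 0 0 1

def N2 (s : ℝ) : Matrix (Idx n) (Idx n) ℝ :=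
  blk3 1 (-(c12 V s)) (c12 V s * c23 V s - c13 V s) 0 1 (-(c23 V s)) 0 0 1

def Km (s : ℝ) : Matrix (Idx n) (Idx n) ℝ :=
  blk3 (e11 V s)⁻¹ 0 0
    (-((b22 V s)⁻¹ * e21 V s * (e11 V s)⁻¹)) (b22 V s)⁻¹ 0
    ((b33 V s)⁻¹ * (b32 V s * (b22 V s)⁻¹ * e21 V s - e31 V s) * (e11 V s)⁻¹)
      (-((b33 V s)⁻¹ * b32 V s * (b22 V s)⁻¹)) (b33 V s)⁻¹

/-- Entrywise derivative of a matrix-valued function. -/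
def Dm {m p : Type*} (f : ℝ → Matrix m p ℝ) (s : ℝ) : Matrix m p ℝ :=
  Matrix.of fun i j => deriv (fun u => f u i j) s

def D1 (s : ℝ) : Matrix (Idx n) (Idx n) ℝ :=
  blk3 (Dm (e11 V) s) 0 0 (Dm (e21 V) s) (Dm (b22 V) s) 0
    (Dm (e31 V) s) (Dm (b32 V) s) (Dm (b33 V) s)

def D2 (s : ℝ) : Matrix (Idx n) (Idx n) ℝ :=
  blk3 0 (Dm (c12 V) s) (Dm (c13 V) s) 0 0 (Dm (c23 V) s) 0 0 0

end

/-! ### Two explicit one-sided inverses -/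

lemma unitUpper_mul (C₁₂ : Matrix (Fin n) (Fin 1) ℝ) (C₁₃ : Matrix (Fin n) (Fin n) ℝ)
    (C₂₃ : Matrix (Fin 1) (Fin n) ℝ) :
    blk3 1 C₁₂ C₁₃ 0 1 C₂₃ 0 0 1 *
      blk3 1 (-C₁₂) (C₁₂ * C₂₃ - C₁₃) 0 1 (-C₂₃) 0 0 1 = 1 := by
  rw [blk3_mul, blk3_one]
  apply blk3_congr <;>
    (simp only [Matrix.mul_neg, Matrix.neg_mul, Matrix.mul_sub, Matrix.sub_mul,
      Matrix.mul_one, Matrix.one_mul, Matrix.mul_zero, Matrix.zero_mul,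
      add_zero, zero_add]; try abel)

lemma lower_mul_K (A : Matrix (Fin n) (Fin n) ℝ) (B : Matrix (Fin 1) (Fin n) ℝ)
    (C : Matrix (Fin 1) (Fin 1) ℝ) (D : Matrix (Fin n) (Fin n) ℝ)
    (Ee : Matrix (Fin n) (Fin 1) ℝ) (F : Matrix (Fin n) (Fin n) ℝ)
    (hA : A.det ≠ 0) (hC : C.det ≠ 0) (hF : F.det ≠ 0) :
    blk3 A 0 0 B C 0 D Ee F *
      blk3 A⁻¹ 0 0 (-(C⁻¹ * B * A⁻¹)) C⁻¹ 0
        (F⁻¹ * (Ee * C⁻¹ * B - D) * A⁻¹) (-(F⁻¹ * Ee * C⁻¹)) F⁻¹ = 1 := by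
  rw [blk3_mul, blk3_one]
  apply blk3_congr <;>
    (simp only [Matrix.mul_neg, Matrix.neg_mul, Matrix.mul_sub, Matrix.sub_mul,
      Matrix.mul_zero, Matrix.zero_mul, add_zero, zero_add, ← Matrix.mul_assoc];
     try simp only [Matrix.mul_nonsing_inv A (isUnit_iff_ne_zero.mpr hA),
      Matrix.mul_nonsing_inv C (isUnit_iff_ne_zero.mpr hC),
      Matrix.mul_nonsing_inv F (isUnit_iff_ne_zero.mpr hF), Matrix.one_mul];
     try abel)


lemma lower_mul_lower (A : Matrix (Fin n) (Fin n) ℝ) (B : Matrix (Fin 1) (Fin n) ℝ)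
    (C : Matrix (Fin 1) (Fin 1) ℝ) (D : Matrix (Fin n) (Fin n) ℝ)
    (Ee : Matrix (Fin n) (Fin 1) ℝ) (F : Matrix (Fin n) (Fin n) ℝ)
    (A' : Matrix (Fin n) (Fin n) ℝ) (B' : Matrix (Fin 1) (Fin n) ℝ)
    (C' : Matrix (Fin 1) (Fin 1) ℝ) (D' : Matrix (Fin n) (Fin n) ℝ)
    (Ee' : Matrix (Fin n) (Fin 1) ℝ) (F' : Matrix (Fin n) (Fin n) ℝ) :
    blk3 A 0 0 B C 0 D Ee F * blk3 A' 0 0 B' C' 0 D' Ee' F' =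
      blk3 (A*A') 0 0 (B*A' + C*B') (C*C') 0 (D*A' + Ee*B' + F*D') (Ee*C' + F*Ee') (F*F') := by
  rw [blk3_mul]
  apply blk3_congr <;>
    simp only [Matrix.mul_zero, Matrix.zero_mul, add_zero, zero_add]

lemma strictUpper_mul_unitUpper (P : Matrix (Fin n) (Fin 1) ℝ) (R : Matrix (Fin n) (Fin n) ℝ)
    (S : Matrix (Fin 1) (Fin n) ℝ) (X : Matrix (Fin n) (Fin 1) ℝ)
    (Y : Matrix (Fin n) (Fin n) ℝ) (Z : Matrix (Fin 1) (Fin n) ℝ) :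
    blk3 0 P R 0 0 S 0 0 0 * blk3 1 X Y 0 1 Z 0 0 1 =
      blk3 0 P (P*Z + R) 0 0 S 0 0 0 := by
  rw [blk3_mul]
  apply blk3_congr <;>
    simp only [Matrix.mul_zero, Matrix.zero_mul, Matrix.mul_one, Matrix.one_mul,
      add_zero, zero_add]

end Stmt13Aux

open Stmt13Aux

/-- With `exp(tV) = G₁(t) G₂(t)` the block Cholesky decomposition and
`L(t) = G₁(t)⁻¹ V G₁(t) = [[−Q(t), r(t), 0], [a₀ᵀ, 0, −r(t)ᵀ], [0, −a₀, Q(t)ᵀ]]`,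
`M(t) = [[−Q(t), 0, 0], [a₀ᵀ, 0, 0], [0, −a₀, Q(t)ᵀ]]`, the Lax equation
`L̇(t) = L(t)M(t) − M(t)L(t)` holds for all `t`. -/
theorem stmt13 (n : ℕ) (A₀ : Matrix (Fin n) (Fin n) ℝ) (hA₀ : A₀ᵀ = A₀)
    (a₀ : Matrix (Fin n) (Fin 1) ℝ) (G₁ G₂ : ℝ → Matrix (Idx n) (Idx n) ℝ)
    (hlow : ∀ t : ℝ, ∃ (B₁₁ : Matrix (Fin n) (Fin n) ℝ) (B₂₁ : Matrix (Fin 1) (Fin n) ℝ)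
      (B₂₂ : Matrix (Fin 1) (Fin 1) ℝ) (B₃₁ : Matrix (Fin n) (Fin n) ℝ)
      (B₃₂ : Matrix (Fin n) (Fin 1) ℝ) (B₃₃ : Matrix (Fin n) (Fin n) ℝ),
      G₁ t = blk3 B₁₁ 0 0 B₂₁ B₂₂ 0 B₃₁ B₃₂ B₃₃)
    (hup : ∀ t : ℝ, ∃ (C₁₂ : Matrix (Fin n) (Fin 1) ℝ) (C₁₃ : Matrix (Fin n) (Fin n) ℝ)
      (C₂₃ : Matrix (Fin 1) (Fin n) ℝ), G₂ t = blk3 1 C₁₂ C₁₃ 0 1 C₂₃ 0 0 1)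
    (hdec : ∀ t : ℝ, NormedSpace.exp (t • Vmat A₀ a₀) = G₁ t * G₂ t)
    (Q : ℝ → Matrix (Fin n) (Fin n) ℝ) (r : ℝ → Matrix (Fin n) (Fin 1) ℝ)
    (hL : ∀ t : ℝ, (G₁ t)⁻¹ * Vmat A₀ a₀ * G₁ t
      = blk3 (-(Q t)) (r t) 0 a₀ᵀ 0 (-(r t)ᵀ) 0 (-a₀) (Q t)ᵀ) :
    ∀ (t : ℝ) (i j : Idx n),
      HasDerivAt (fun s => blk3 (-(Q s)) (r s) 0 a₀ᵀ 0 (-(r s)ᵀ) 0 (-a₀) (Q s)ᵀ i j)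
        ((blk3 (-(Q t)) (r t) 0 a₀ᵀ 0 (-(r t)ᵀ) 0 (-a₀) (Q t)ᵀ *
            blk3 (-(Q t)) 0 0 a₀ᵀ 0 0 0 (-a₀) (Q t)ᵀ -
          blk3 (-(Q t)) 0 0 a₀ᵀ 0 0 0 (-a₀) (Q t)ᵀ *
            blk3 (-(Q t)) (r t) 0 a₀ᵀ 0 (-(r t)ᵀ) 0 (-a₀) (Q t)ᵀ) i j) t := by
  intro t i j
  set W : Matrix (Idx n) (Idx n) ℝ := Vmat A₀ a₀ with hWdef
  -- ### Step 1: identify the Cholesky factors with the explicit formulas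
  have key : ∀ s : ℝ, G₁ s = F1 W s ∧ G₂ s = F2 W s ∧
      (e11 W s).det ≠ 0 ∧ (b22 W s).det ≠ 0 ∧ (b33 W s).det ≠ 0 := by
    intro s
    obtain ⟨B11, B21, B22, B31, B32, B33, hG1⟩ := hlow s
    obtain ⟨C12, C13, C23, hG2⟩ := hup s
    have hE0 : Em W s = G₁ s * G₂ s := hdec s
    have hNG2 : G₂ s * blk3 1 (-C12) (C12 * C23 - C13) 0 1 (-C23) 0 0 1 = 1 := by
      rw [hG2]; exact unitUpper_mul C12 C13 C23
    have hG1E : G₁ s = Em W s * blk3 1 (-C12) (C12 * C23 - C13) 0 1 (-C23) 0 0 1 := by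
      rw [hE0, Matrix.mul_assoc, hNG2, Matrix.mul_one]
    have hNunit : IsUnit (blk3 1 (-C12) (C12 * C23 - C13) 0 1 (-C23) 0 0 1) := by
      have h := invertibleOfLeftInverse _ _ hNG2
      exact isUnit_of_invertible _
    have hG1unit : IsUnit (G₁ s) := by rw [hG1E]; exact (isUnit_Em W s).mul hNunit
    have hdetG1 : (G₁ s).det ≠ 0 :=
      isUnit_iff_ne_zero.mp ((Matrix.isUnit_iff_isUnit_det _).mp hG1unit)
    rw [hG1, det_blk3_lower] at hdetG1
    have hB11 : B11.det ≠ 0 := fun h => hdetG1 (by rw [h, zero_mul, zero_mul])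
    have hB22 : B22.det ≠ 0 := fun h => hdetG1 (by rw [h, mul_zero, zero_mul])
    have hB33 : B33.det ≠ 0 := fun h => hdetG1 (by rw [h, mul_zero])
    have hE1 := hE0
    rw [hG1, hG2, blk3_mul] at hE1
    simp only [Matrix.mul_one, Matrix.one_mul, Matrix.mul_zero, Matrix.zero_mul,
      add_zero, zero_add] at hE1
    obtain ⟨h11, h12, h13, h21, h22, h23, h31, h32, h33⟩ :=
      blk3_inj _ _ _ _ _ _ _ _ _ _ _ _ _ _ _ _ _ _ ((eq_blk3 (Em W s)).symm.trans hE1)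
    have e11B : e11 W s = B11 := h11
    have e12B : e12 W s = B11 * C12 := h12
    have e13B : e13 W s = B11 * C13 := h13
    have e21B : e21 W s = B21 := h21
    have e22B : e22 W s = B21 * C12 + B22 := h22
    have e23B : e23 W s = B21 * C13 + B22 * C23 := h23
    have e31B : e31 W s = B31 := h31
    have e32B : e32 W s = B31 * C12 + B32 := h32
    have e33B : e33 W s = B31 * C13 + B32 * C23 + B33 := h33
    have hc12 : c12 W s = C12 := by
      unfold c12
      rw [e11B, e12B, ← Matrix.mul_assoc,
        Matrix.nonsing_inv_mul _ (isUnit_iff_ne_zero.mpr hB11), Matrix.one_mul]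
    have hc13 : c13 W s = C13 := by
      unfold c13
      rw [e11B, e13B, ← Matrix.mul_assoc,
        Matrix.nonsing_inv_mul _ (isUnit_iff_ne_zero.mpr hB11), Matrix.one_mul]
    have hb22 : b22 W s = B22 := by
      unfold b22
      rw [e22B, e21B, hc12, add_sub_cancel_left]
    have hc23 : c23 W s = C23 := by
      unfold c23
      rw [hb22, e23B, e21B, hc13, add_sub_cancel_left, ← Matrix.mul_assoc,
        Matrix.nonsing_inv_mul _ (isUnit_iff_ne_zero.mpr hB22), Matrix.one_mul]
    have hb32 : b32 W s = B32 := by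
      unfold b32
      rw [e32B, e31B, hc12, add_sub_cancel_left]
    have hb33 : b33 W s = B33 := by
      unfold b33
      rw [e33B, e31B, hc13, hb32, hc23]
      abel
    refine ⟨?_, ?_, ?_, ?_, ?_⟩
    · rw [hG1]
      exact blk3_congr _ _ _ _ _ _ _ _ _ _ _ _ _ _ _ _ _ _
        e11B.symm rfl rfl e21B.symm hb22.symm rfl e31B.symm hb32.symm hb33.symm
    · rw [hG2]
      exact blk3_congr _ _ _ _ _ _ _ _ _ _ _ _ _ _ _ _ _ _
        rfl hc12.symm hc13.symm rfl rfl hc23.symm rfl rfl rfl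
    · rw [e11B]; exact hB11
    · rw [hb22]; exact hB22
    · rw [hb33]; exact hB33
  have hG1F : ∀ s, G₁ s = F1 W s := fun s => (key s).1
  have hG2F : ∀ s, G₂ s = F2 W s := fun s => (key s).2.1
  have hd11 : ∀ s, (e11 W s).det ≠ 0 := fun s => (key s).2.2.1
  have hd22 : ∀ s, (b22 W s).det ≠ 0 := fun s => (key s).2.2.2.1
  have hd33 : ∀ s, (b33 W s).det ≠ 0 := fun s => (key s).2.2.2.2
  -- ### Step 2: differentiability of all entries
  have hEd : ∀ (u : ℝ) (i j : Idx n), HasDerivAt (fun s => Em W s i j) ((W * Em W u) i j) u :=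
    fun u i j => Em_entry_hasDerivAt W u i j
  have d_e11 : ∀ u (i j : Fin n), DifferentiableAt ℝ (fun s => e11 W s i j) u :=
    fun u i j => (hEd u (Sum.inl (Sum.inl i)) (Sum.inl (Sum.inl j))).differentiableAt
  have d_e12 : ∀ u (i : Fin n) (j : Fin 1), DifferentiableAt ℝ (fun s => e12 W s i j) u :=
    fun u i j => (hEd u (Sum.inl (Sum.inl i)) (Sum.inl (Sum.inr j))).differentiableAt
  have d_e13 : ∀ u (i j : Fin n), DifferentiableAt ℝ (fun s => e13 W s i j) u :=
    fun u i j => (hEd u (Sum.inl (Sum.inl i)) (Sum.inr j)).differentiableAt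
  have d_e21 : ∀ u (i : Fin 1) (j : Fin n), DifferentiableAt ℝ (fun s => e21 W s i j) u :=
    fun u i j => (hEd u (Sum.inl (Sum.inr i)) (Sum.inl (Sum.inl j))).differentiableAt
  have d_e22 : ∀ u (i j : Fin 1), DifferentiableAt ℝ (fun s => e22 W s i j) u :=
    fun u i j => (hEd u (Sum.inl (Sum.inr i)) (Sum.inl (Sum.inr j))).differentiableAt
  have d_e23 : ∀ u (i : Fin 1) (j : Fin n), DifferentiableAt ℝ (fun s => e23 W s i j) u :=
    fun u i j => (hEd u (Sum.inl (Sum.inr i)) (Sum.inr j)).differentiableAt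
  have d_e31 : ∀ u (i j : Fin n), DifferentiableAt ℝ (fun s => e31 W s i j) u :=
    fun u i j => (hEd u (Sum.inr i) (Sum.inl (Sum.inl j))).differentiableAt
  have d_e32 : ∀ u (i : Fin n) (j : Fin 1), DifferentiableAt ℝ (fun s => e32 W s i j) u :=
    fun u i j => (hEd u (Sum.inr i) (Sum.inl (Sum.inr j))).differentiableAt
  have d_e33 : ∀ u (i j : Fin n), DifferentiableAt ℝ (fun s => e33 W s i j) u :=
    fun u i j => (hEd u (Sum.inr i) (Sum.inr j)).differentiableAt
  have d_inv11 : ∀ u (i j : Fin n), DifferentiableAt ℝ (fun s => (e11 W s)⁻¹ i j) u :=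
    fun u i j => inv_entry_differentiableAt (e11 W) u (d_e11 u) (hd11 u) i j
  have d_c12 : ∀ u (i : Fin n) (j : Fin 1), DifferentiableAt ℝ (fun s => c12 W s i j) u :=
    fun u i j => entry_differentiableAt_mul (fun s => (e11 W s)⁻¹) (e12 W) u
      (d_inv11 u) (d_e12 u) i j
  have d_c13 : ∀ u (i j : Fin n), DifferentiableAt ℝ (fun s => c13 W s i j) u :=
    fun u i j => entry_differentiableAt_mul (fun s => (e11 W s)⁻¹) (e13 W) u
      (d_inv11 u) (d_e13 u) i j
  have d_b22 : ∀ u (i j : Fin 1), DifferentiableAt ℝ (fun s => b22 W s i j) u :=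
    fun u i j => (d_e22 u i j).sub
      (entry_differentiableAt_mul (e21 W) (c12 W) u (d_e21 u) (d_c12 u) i j)
  have d_inv22 : ∀ u (i j : Fin 1), DifferentiableAt ℝ (fun s => (b22 W s)⁻¹ i j) u :=
    fun u i j => inv_entry_differentiableAt (b22 W) u (d_b22 u) (hd22 u) i j
  have d_c23 : ∀ u (i : Fin 1) (j : Fin n), DifferentiableAt ℝ (fun s => c23 W s i j) u :=
    fun u i j => entry_differentiableAt_mul (fun s => (b22 W s)⁻¹)
      (fun s => e23 W s - e21 W s * c13 W s) u (d_inv22 u)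
      (fun i j => (d_e23 u i j).sub
        (entry_differentiableAt_mul (e21 W) (c13 W) u (d_e21 u) (d_c13 u) i j)) i j
  have d_b32 : ∀ u (i : Fin n) (j : Fin 1), DifferentiableAt ℝ (fun s => b32 W s i j) u :=
    fun u i j => (d_e32 u i j).sub
      (entry_differentiableAt_mul (e31 W) (c12 W) u (d_e31 u) (d_c12 u) i j)
  have d_b33 : ∀ u (i j : Fin n), DifferentiableAt ℝ (fun s => b33 W s i j) u :=
    fun u i j => ((d_e33 u i j).sub
      (entry_differentiableAt_mul (e31 W) (c13 W) u (d_e31 u) (d_c13 u) i j)).sub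
      (entry_differentiableAt_mul (b32 W) (c23 W) u (d_b32 u) (d_c23 u) i j)
  have d_inv33 : ∀ u (i j : Fin n), DifferentiableAt ℝ (fun s => (b33 W s)⁻¹ i j) u :=
    fun u i j => inv_entry_differentiableAt (b33 W) u (d_b33 u) (hd33 u) i j
  have d_K : ∀ u (i j : Idx n), DifferentiableAt ℝ (fun s => Km W s i j) u := by
    intro u i j
    rcases i with (i | i) | i <;> rcases j with (j | j) | j
    · exact d_inv11 u i j
    · exact differentiableAt_const _
    · exact differentiableAt_const _
    · exact (entry_differentiableAt_mul (fun s => (b22 W s)⁻¹ * e21 W s)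
        (fun s => (e11 W s)⁻¹) u
        (fun i j => entry_differentiableAt_mul _ _ u (d_inv22 u) (d_e21 u) i j)
        (d_inv11 u) i j).neg
    · exact d_inv22 u i j
    · exact differentiableAt_const _
    · exact entry_differentiableAt_mul
        (fun s => (b33 W s)⁻¹ * (b32 W s * (b22 W s)⁻¹ * e21 W s - e31 W s))
        (fun s => (e11 W s)⁻¹) u
        (fun i j => entry_differentiableAt_mul _ _ u (d_inv33 u)
          (fun i j => (entry_differentiableAt_mul (fun s => b32 W s * (b22 W s)⁻¹)
            (e21 W) u
            (fun i j => entry_differentiableAt_mul _ _ u (d_b32 u) (d_inv22 u) i j)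
            (d_e21 u) i j).sub (d_e31 u i j)) i j)
        (d_inv11 u) i j
    · exact (entry_differentiableAt_mul (fun s => (b33 W s)⁻¹ * b32 W s)
        (fun s => (b22 W s)⁻¹) u
        (fun i j => entry_differentiableAt_mul _ _ u (d_inv33 u) (d_b32 u) i j)
        (d_inv22 u) i j).neg
    · exact d_inv33 u i j
  -- ### Step 3: derivatives of the factors
  have hF1d : ∀ u (i j : Idx n), HasDerivAt (fun s => F1 W s i j) (D1 W u i j) u := by
    intro u i j
    refine blk3_entry_hasDerivAt ?_ ?_ ?_ ?_ ?_ ?_ ?_ ?_ ?_ i j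
    · exact fun i j => (d_e11 u i j).hasDerivAt
    · exact fun i j => hasDerivAt_const _ _
    · exact fun i j => hasDerivAt_const _ _
    · exact fun i j => (d_e21 u i j).hasDerivAt
    · exact fun i j => (d_b22 u i j).hasDerivAt
    · exact fun i j => hasDerivAt_const _ _
    · exact fun i j => (d_e31 u i j).hasDerivAt
    · exact fun i j => (d_b32 u i j).hasDerivAt
    · exact fun i j => (d_b33 u i j).hasDerivAt
  have hF2d : ∀ u (i j : Idx n), HasDerivAt (fun s => F2 W s i j) (D2 W u i j) u := by
    intro u i j
    refine blk3_entry_hasDerivAt ?_ ?_ ?_ ?_ ?_ ?_ ?_ ?_ ?_ i j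
    · exact fun i j => hasDerivAt_const _ _
    · exact fun i j => (d_c12 u i j).hasDerivAt
    · exact fun i j => (d_c13 u i j).hasDerivAt
    · exact fun i j => hasDerivAt_const _ _
    · exact fun i j => hasDerivAt_const _ _
    · exact fun i j => (d_c23 u i j).hasDerivAt
    · exact fun i j => hasDerivAt_const _ _
    · exact fun i j => hasDerivAt_const _ _
    · exact fun i j => hasDerivAt_const _ _
  have hKd : ∀ u (i j : Idx n), HasDerivAt (fun s => Km W s i j) (Dm (Km W) u i j) u :=
    fun u i j => (d_K u i j).hasDerivAt
  -- ### Step 4: the fundamental identities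
  have hEeq : ∀ s, Em W s = F1 W s * F2 W s :=
    fun s => (hdec s).trans (by rw [hG1F s, hG2F s])
  have hVE : ∀ u, W * Em W u = D1 W u * F2 W u + F1 W u * D2 W u := by
    intro u; ext i' j'
    have h2 := entry_hasDerivAt_mul (F1 W) (D1 W) (F2 W) (D2 W) u (hF1d u) (hF2d u) i' j'
    have h1 := hEd u i' j'
    rw [show (fun s => Em W s i' j') = fun s => (F1 W s * F2 W s) i' j' from
      funext fun s => by rw [hEeq s]] at h1
    exact h1.unique h2
  have hF1K : ∀ s, F1 W s * Km W s = 1 :=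
    fun s => lower_mul_K _ _ _ _ _ _ (hd11 s) (hd22 s) (hd33 s)
  have hKF1 : ∀ s, Km W s * F1 W s = 1 := fun s => mul_eq_one_comm.mp (hF1K s)
  have hF2N : ∀ s, F2 W s * N2 W s = 1 := fun s => unitUpper_mul _ _ _
  have hF1inv : ∀ s, (F1 W s)⁻¹ = Km W s := fun s => Matrix.inv_eq_right_inv (hF1K s)
  have hLs : ∀ s, Km W s * W * F1 W s
      = blk3 (-(Q s)) (r s) 0 a₀ᵀ 0 (-(r s)ᵀ) 0 (-a₀) (Q s)ᵀ := by
    intro s; rw [← hF1inv s, ← hG1F s]; exact hL s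
  -- ### Step 5: split L into lower and strictly upper parts
  have step1 : W * F1 W t = D1 W t + F1 W t * (D2 W t * N2 W t) := by
    have h0 := congrArg (fun X => X * N2 W t) (hVE t)
    rw [hEeq t] at h0
    rw [Matrix.add_mul, Matrix.mul_assoc (D1 W t), hF2N t, Matrix.mul_one,
      Matrix.mul_assoc (F1 W t) (D2 W t) (N2 W t)] at h0
    rw [← Matrix.mul_assoc W (F1 W t) (F2 W t),
      Matrix.mul_assoc (W * F1 W t) (F2 W t) (N2 W t), hF2N t, Matrix.mul_one] at h0
    exact h0
  have hsplit : Km W t * W * F1 W t = Km W t * D1 W t + D2 W t * N2 W t := by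
    rw [Matrix.mul_assoc, step1, Matrix.mul_add,
      ← Matrix.mul_assoc (Km W t) (F1 W t), hKF1 t, Matrix.one_mul]
  obtain ⟨l11, l21, l22, l31, l32, l33, hKD1⟩ :
      ∃ l11 l21 l22 l31 l32 l33, Km W t * D1 W t = blk3 l11 0 0 l21 l22 0 l31 l32 l33 :=
    ⟨_, _, _, _, _, _, lower_mul_lower _ _ _ _ _ _ _ _ _ _ _ _⟩
  obtain ⟨w12, w13, w23, hDN⟩ :
      ∃ w12 w13 w23, D2 W t * N2 W t = blk3 0 w12 w13 0 0 w23 0 0 0 :=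
    ⟨_, _, _, strictUpper_mul_unitUpper _ _ _ _ _ _⟩
  have hsum := hsplit
  rw [hLs t, hKD1, hDN, blk3_add] at hsum
  obtain ⟨q11, q12, q13, q21, q22, q23, q31, q32, q33⟩ :=
    blk3_inj _ _ _ _ _ _ _ _ _ _ _ _ _ _ _ _ _ _ hsum
  have hM : blk3 (-(Q t)) 0 0 a₀ᵀ 0 0 0 (-a₀) (Q t)ᵀ = Km W t * D1 W t := by
    rw [hKD1]
    refine blk3_congr _ _ _ _ _ _ _ _ _ _ _ _ _ _ _ _ _ _
      (by simpa using q11) rfl rfl (by simpa using q21) (by simpa using q22) rfl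
      (by simpa using q31) (by simpa using q32) (by simpa using q33)
  -- ### Step 6: derivative of Km and final assembly
  have hD1M : D1 W t = F1 W t * (Km W t * D1 W t) := by
    rw [← Matrix.mul_assoc, hF1K t, Matrix.one_mul]
  have hDK0 : Dm (Km W) t * F1 W t + Km W t * D1 W t = 0 := by
    ext i' j'
    have h2 := entry_hasDerivAt_mul (Km W) (fun u => Dm (Km W) u) (F1 W) (D1 W) t
      (hKd t) (hF1d t) i' j'
    have h1 : HasDerivAt (fun s => (Km W s * F1 W s) i' j') 0 t := by
      rw [show (fun s => (Km W s * F1 W s) i' j')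
        = fun _ => (1 : Matrix (Idx n) (Idx n) ℝ) i' j' from funext fun s => by rw [hKF1 s]]
      exact hasDerivAt_const _ _
    have h3 := h2.unique h1
    simpa using h3
  have hDKeq : Dm (Km W) t = -(Km W t * D1 W t) * Km W t := by
    have h1 : Dm (Km W) t * F1 W t = -(Km W t * D1 W t) :=
      eq_neg_of_add_eq_zero_left hDK0
    have h2 := congrArg (fun X => X * Km W t) h1
    rw [Matrix.mul_assoc, hF1K t, Matrix.mul_one] at h2
    exact h2
  have htriple := entry_hasDerivAt_mul (fun s => Km W s * W)
    (fun u => Dm (Km W) u * W + Km W u * 0) (F1 W) (D1 W) t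
    (fun i' j' => entry_hasDerivAt_mul (Km W) (fun u => Dm (Km W) u) (fun _ => W)
      (fun _ => 0) t (hKd t) (fun i' j' => hasDerivAt_const _ _) i' j')
    (hF1d t) i j
  have hval : (Dm (Km W) t * W + Km W t * 0) * F1 W t + (Km W t * W) * D1 W t
      = blk3 (-(Q t)) (r t) 0 a₀ᵀ 0 (-(r t)ᵀ) 0 (-a₀) (Q t)ᵀ *
          blk3 (-(Q t)) 0 0 a₀ᵀ 0 0 0 (-a₀) (Q t)ᵀ -
        blk3 (-(Q t)) 0 0 a₀ᵀ 0 0 0 (-a₀) (Q t)ᵀ *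
          blk3 (-(Q t)) (r t) 0 a₀ᵀ 0 (-(r t)ᵀ) 0 (-a₀) (Q t)ᵀ := by
    rw [Matrix.mul_zero, add_zero, hDKeq, ← hM, hD1M, ← hM]
    have e1 : -(blk3 (-(Q t)) 0 0 a₀ᵀ 0 0 0 (-a₀) (Q t)ᵀ) * Km W t * W * F1 W t
        = -(blk3 (-(Q t)) 0 0 a₀ᵀ 0 0 0 (-a₀) (Q t)ᵀ * (Km W t * W * F1 W t)) := by
      rw [Matrix.neg_mul, Matrix.neg_mul, Matrix.neg_mul, Matrix.mul_assoc, Matrix.mul_assoc,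
        Matrix.mul_assoc]
    have e2 : Km W t * W * (F1 W t * blk3 (-(Q t)) 0 0 a₀ᵀ 0 0 0 (-a₀) (Q t)ᵀ)
        = Km W t * W * F1 W t * blk3 (-(Q t)) 0 0 a₀ᵀ 0 0 0 (-a₀) (Q t)ᵀ := by
      rw [Matrix.mul_assoc (Km W t * W) (F1 W t) _]
    rw [e1, e2, hLs t]
    abel
  rw [show (fun s => blk3 (-(Q s)) (r s) 0 a₀ᵀ 0 (-(r s)ᵀ) 0 (-a₀) (Q s)ᵀ i j)
    = fun s => (Km W s * W * F1 W s) i j from funext fun s => by rw [hLs s], ← hval]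
  exact htriple
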